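/- arXiv:2404.10248 — 5 statements merged into one kernel-verified Lean document; each statement's English description precedes it below -/
import Mathlib

section
/- Let h : ℂ → ℂ be entire and nonconstant, and let q, c, A, C ∈ ℂ with q ≠ 0 and |A| = 1. If h(qz + c) = A·h(z) + C for all z ∈ ℂ, then |q| = 1. -/
open Filter Topology

lemma aux_contract (g : ℂ → ℂ) (hg : Continuous g) (k p : ℂ)
    (hk : ‖k‖ < 1)
    (hrec : ∀ z, ‖g z‖ = ‖k‖ * ‖g (k * (z - p) + p)‖) :
    ∀ z, g z = 0 := by
  intro z
  set s : ℕ → ℂ := fun n => k ^ n * (z - p) + p with hs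
  have hstep : ∀ n, s (n + 1) = k * (s n - p) + p := by
    intro n; simp [hs, pow_succ]; ring
  have hiter : ∀ n, ‖g z‖ = (‖k‖) ^ n * ‖g (s n)‖ := by
    intro n
    induction n with
    | zero => simp [hs]
    | succ n ih =>
        rw [ih, hrec (s n), ← hstep n, pow_succ]
        ring
  have hs_tendsto : Tendsto s atTop (𝓝 p) := by
    have h1 : Tendsto (fun n : ℕ => k ^ n) atTop (𝓝 0) :=
      tendsto_pow_atTop_nhds_zero_of_norm_lt_one hk
    have h2 : Tendsto (fun n : ℕ => k ^ n * (z - p) + p) atTop (𝓝 (0 * (z - p) + p)) :=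
      ((h1.mul tendsto_const_nhds).add tendsto_const_nhds)
    simpa using h2
  have hgs : Tendsto (fun n => ‖g (s n)‖) atTop (𝓝 (‖g p‖)) :=
    ((continuous_norm.comp hg).continuousAt.tendsto.comp hs_tendsto)
  have hk_tendsto : Tendsto (fun n : ℕ => (‖k‖) ^ n) atTop (𝓝 0) := by
    apply tendsto_pow_atTop_nhds_zero_of_lt_one (by positivity) hk
  have hlim : Tendsto (fun n => (‖k‖) ^ n * ‖g (s n)‖) atTop
      (𝓝 (0 * ‖g p‖)) := hk_tendsto.mul hgs
  have hconst : Tendsto (fun _ : ℕ => ‖g z‖) atTop (𝓝 (‖g z‖)) :=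
    tendsto_const_nhds
  have hfun : (fun n => (‖k‖) ^ n * ‖g (s n)‖)
      = fun _ : ℕ => ‖g z‖ := funext fun n => (hiter n).symm
  rw [hfun, zero_mul] at hlim
  exact norm_eq_zero.mp (tendsto_nhds_unique hconst hlim)

theorem modulus_q_eq_one (h : ℂ → ℂ) (hh : Differentiable ℂ h)
    (hnc : ¬ ∃ w : ℂ, ∀ z : ℂ, h z = w) (q c A C : ℂ) (hq : q ≠ 0)
    (hA : ‖A‖ = 1) (heq : ∀ z : ℂ, h (q * z + c) = A * h z + C) :
    ‖q‖ = 1 := by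
  by_contra hne
  set g := deriv h with hg
  have hgc : Continuous g := (hh.contDiff : ContDiff ℂ 2 h).continuous_deriv (by norm_num)
  -- functional equation for the derivative: q * g (q*z+c) = A * g z
  have hgeq : ∀ z : ℂ, g (q * z + c) * q = A * g z := by
    intro z
    have h1 : HasDerivAt (fun z : ℂ => q * z + c) q z := by
      simpa using ((hasDerivAt_id z).const_mul q).add_const c
    have h2 : HasDerivAt (fun z => h (q * z + c)) (g (q * z + c) * q) z :=
      (hh (q * z + c)).hasDerivAt.comp z h1
    have h3 : HasDerivAt (fun z => A * h z + C) (A * g z) z :=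
      ((hh z).hasDerivAt.const_mul A).add_const C
    have h4 : HasDerivAt (fun z => h (q * z + c)) (A * g z) z :=
      h3.congr_of_eventuallyEq (Filter.Eventually.of_forall fun x => heq x)
    exact h2.unique h4
  have habs : ∀ z : ℂ, ‖q‖ * ‖g (q * z + c)‖ = ‖g z‖ := by
    intro z
    have := congrArg norm (hgeq z)
    simpa [norm_mul, hA, mul_comm] using this
  have hq1 : q ≠ 1 := by
    intro h1; apply hne; simp [h1]
  set p : ℂ := c / (1 - q) with hp
  have hp_eq : p * (1 - q) = c := by
    rw [hp, div_mul_cancel₀ _ (sub_ne_zero.mpr (Ne.symm hq1))]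
  -- g vanishes everywhere
  have hg0 : ∀ z, g z = 0 := by
    rcases lt_or_gt_of_ne hne with hlt | hgt
    · -- |q| < 1, use k = q
      apply aux_contract g hgc q p hlt
      intro z
      have hfix : q * (z - p) + p = q * z + c := by
        have : p - q * p = c := by linear_combination hp_eq
        linear_combination this
      rw [hfix, habs z]
    · -- |q| > 1, use k = 1/q
      have hk : ‖1 / q‖ < 1 := by
        rw [norm_div, norm_one, div_lt_one (by linarith)]
        linarith
      apply aux_contract g hgc (1 / q) p hk
      intro w
      have hfix : q * ((1 / q) * (w - p) + p) + c = w := by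
        have h1 : q * (1 / q) = 1 := mul_one_div_cancel hq
        have : q * ((1 / q) * (w - p) + p) = q * (1 / q) * (w - p) + q * p := by ring
        rw [this, h1, one_mul]
        linear_combination (-1 : ℂ) * hp_eq
      have := habs ((1 / q) * (w - p) + p)
      rw [hfix] at this
      rw [← this]
      rw [← mul_assoc]
      rw [norm_div, norm_one]
      rw [div_mul_cancel₀]
      · ring
      · simpa using hq
  -- hence h constant, contradiction
  apply hnc
  refine ⟨h 0, fun z => ?_⟩
  exact is_const_of_deriv_eq_zero hh hg0 z 0
end

section
/- Let h : ℂ → ℂ be entire, nonconstant, and nowhere zero. Let c, A, B ∈ ℂ with A ≠ 0, and suppose h(z + c) = A·h(z) + B for all z ∈ ℂ. Then B = 0. -/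
open Complex Metric Set


lemma entire_primitive {f : ℂ → ℂ} (hf : Differentiable ℂ f) :
    ∃ F : ℂ → ℂ, ∀ z : ℂ, HasDerivAt F (f z) z := by
  classical
  set a : ℕ → ℂ := fun n => (Nat.factorial n : ℂ)⁻¹ • iteratedDeriv n f 0 with ha
  have hsum : ∀ z : ℂ, HasSum (fun n => a n * z ^ n) (f z) := by
    intro z
    have := Complex.hasSum_taylorSeries_of_entire hf 0 z
    simpa [a, smul_eq_mul, mul_comm, mul_left_comm, sub_zero] using this
  refine ⟨fun y => ∑' n, (a n / ((n : ℂ) + 1)) * y ^ (n + 1), fun z => ?_⟩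
  set R : ℝ := ‖z‖ + 1 with hR
  have hRpos : (0:ℝ) < R := by positivity
  obtain ⟨C, hC⟩ : ∃ C, ∀ n, ‖a n‖ * (2*R) ^ n ≤ C := by
    have h0 : Filter.Tendsto (fun n => ‖a n * ((2*R : ℝ) : ℂ) ^ n‖) Filter.atTop (nhds 0) := by
      simpa using ((hsum ((2*R : ℝ) : ℂ)).summable.tendsto_atTop_zero).norm
    obtain ⟨C, hC⟩ := h0.bddAbove_range
    refine ⟨C, fun n => ?_⟩
    have := hC (Set.mem_range_self n)
    rw [norm_mul, norm_pow, Complex.norm_real, Real.norm_eq_abs,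
      abs_of_pos (by positivity : (0:ℝ) < 2*R)] at this
    exact this
  have hu : Summable (fun n => ‖a n‖ * R ^ n) := by
    have hle : ∀ n, ‖a n‖ * R ^ n ≤ C * (1/2) ^ n := by
      intro n
      have h2 : ‖a n‖ * (2*R) ^ n = (‖a n‖ * R ^ n) * 2 ^ n := by
        rw [mul_pow]; ring
      have hCn := hC n
      rw [h2] at hCn
      have h2n : (0:ℝ) < 2 ^ n := by positivity
      rw [div_pow, one_pow, mul_one_div, le_div_iff₀ h2n]
      linarith
    exact Summable.of_nonneg_of_le (fun n => by positivity) hle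
      ((summable_geometric_of_lt_one (by norm_num) (by norm_num)).mul_left C)
  have key : HasDerivAt (fun y => ∑' n, (a n / ((n : ℂ) + 1)) * y ^ (n + 1))
      (∑' n, a n * z ^ n) z := by
    refine hasDerivAt_tsum_of_isPreconnected (g := fun n y => (a n / ((n : ℂ) + 1)) * y ^ (n + 1))
      (g' := fun n y => a n * y ^ n)
      hu (isOpen_ball (x := (0:ℂ)) (ε := R))
      (convex_ball 0 R).isPreconnected (fun n y _ => ?_) (fun n y hy => ?_)
      (mem_ball_self hRpos) ?_ ?_
    · have hp : HasDerivAt (fun y : ℂ => y ^ (n + 1)) (((n:ℂ)+1) * y ^ n) y := by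
        simpa using hasDerivAt_pow (n+1) y
      have h3 := hp.const_mul (a n / ((n : ℂ) + 1))
      have hne : ((n:ℂ)+1) ≠ 0 := Nat.cast_add_one_ne_zero n
      have h4 : a n / ((n:ℂ)+1) * (((n:ℂ)+1) * y ^ n) = a n * y ^ n := by
        field_simp
      rwa [h4] at h3
    · have hyR : ‖y‖ ≤ R := by
        have := mem_ball_zero_iff.1 hy
        exact this.le
      calc ‖a n * y ^ n‖ = ‖a n‖ * ‖y‖ ^ n := by rw [norm_mul, norm_pow]
        _ ≤ ‖a n‖ * R ^ n := by gcongr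
    · exact summable_of_ne_finset_zero (s := ∅) (fun n _ => by simp)
    · simpa [mem_ball, dist_eq_norm, hR] using (lt_add_one ‖z‖)
  rwa [(hsum z).tsum_eq] at key


lemma entire_deriv {f : ℂ → ℂ} (hf : Differentiable ℂ f) : Differentiable ℂ (deriv f) :=
  (analyticOnNhd_univ_iff_differentiable).1 ((analyticOnNhd_univ_iff_differentiable).2 hf).deriv


lemma entire_log {f : ℂ → ℂ} (hf : Differentiable ℂ f) (hnz : ∀ z, f z ≠ 0) :
    ∃ g : ℂ → ℂ, Differentiable ℂ g ∧ ∀ z, Complex.exp (g z) = f z := by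
  have hq : Differentiable ℂ (fun z => deriv f z / f z) :=
    (entire_deriv hf).div hf hnz
  obtain ⟨F, hF⟩ := entire_primitive hq
  have hFd : Differentiable ℂ F := fun z => (hF z).differentiableAt
  set φ : ℂ → ℂ := fun z => f z * Complex.exp (-F z) with hφ
  have hφd : Differentiable ℂ φ := hf.mul ((hFd.neg).cexp)
  have hφ' : ∀ z, HasDerivAt φ 0 z := by
    intro z
    have h1 : HasDerivAt f (deriv f z) z := (hf z).hasDerivAt
    have h2 : HasDerivAt (fun z => Complex.exp (-F z))
        (Complex.exp (-F z) * (-(deriv f z / f z))) z := by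
      have := ((hF z).neg).cexp
      simpa [mul_comm] using this
    have h3 := h1.mul h2
    have h4 : deriv f z * Complex.exp (-F z) + f z * (Complex.exp (-F z) * -(deriv f z / f z)) = 0 := by
      rw [mul_left_comm, mul_neg, mul_div_cancel₀ _ (hnz z)]
      ring
    rw [h4] at h3
    exact h3
  have hconst : ∀ z, φ z = φ 0 := by
    intro z
    exact is_const_of_deriv_eq_zero hφd (fun x => (hφ' x).deriv) z 0
  have hφ0 : φ 0 ≠ 0 := mul_ne_zero (hnz 0) (Complex.exp_ne_zero _)
  refine ⟨fun z => F z + Complex.log (φ 0), hFd.add_const _, fun z => ?_⟩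
  have : Complex.exp (F z + Complex.log (φ 0)) = Complex.exp (F z) * φ 0 := by
    rw [Complex.exp_add, Complex.exp_log hφ0]
  rw [this, ← hconst z]
  simp only [hφ]
  rw [mul_comm (f z), ← mul_assoc, ← Complex.exp_add]
  simp



lemma bloch {H : ℂ → ℂ} (hH : Differentiable ℂ H) {z₀ : ℂ} (hd0 : deriv H z₀ ≠ 0)
    {R : ℝ} (hR : 0 < R) : ∃ w : ℂ, ball w R ⊆ Set.range H := by
  have hH' : Differentiable ℂ (deriv H) := entire_deriv hH
  set δ : ℝ := ‖deriv H z₀‖ with hδ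
  have hδ0 : 0 < δ := norm_pos_iff.2 hd0
  set T : ℝ := 64 * R / δ with hT
  have hT0 : 0 < T := by positivity
  set u : ℂ → ℝ := fun z => (T - ‖z - z₀‖) * ‖deriv H z‖ with hu
  have hucont : Continuous u := by
    apply Continuous.mul
    · exact (continuous_const.sub ((continuous_id.sub continuous_const).norm))
    · exact hH'.continuous.norm
  obtain ⟨p, hpK, hpmax⟩ := (isCompact_closedBall z₀ T).exists_isMaxOn
    ⟨z₀, mem_closedBall_self hT0.le⟩ hucont.continuousOn
  have hup : T * δ ≤ u p := by
    have := hpmax (mem_closedBall_self hT0.le)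
    simpa [hu, hδ] using this
  have hup0 : 0 < u p := lt_of_lt_of_le (by positivity) hup
  set μ : ℝ := ‖deriv H p‖ with hμ
  have hμ0 : 0 < μ := by
    rcases lt_or_ge 0 μ with h | h
    · exact h
    · exfalso
      have : μ = 0 := le_antisymm h (norm_nonneg _)
      rw [hu] at hup0
      simp only [← hμ, this, mul_zero] at hup0
      exact lt_irrefl 0 hup0
  have hfac : 0 < T - ‖p - z₀‖ := by
    by_contra hcon
    push_neg at hcon
    have : u p ≤ 0 := mul_nonpos_of_nonpos_of_nonneg (by linarith) (norm_nonneg _)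
    linarith
  set ρ : ℝ := (T - ‖p - z₀‖) / 2 with hρ
  have hρ0 : 0 < ρ := by positivity
  have hupeq : u p = 2 * ρ * μ := by rw [hu]; simp only [← hμ]; rw [hρ]; ring
  -- derivative bound on closedBall p ρ
  have hder_bound : ∀ z ∈ closedBall p ρ, ‖deriv H z‖ ≤ 2 * μ := by
    intro z hz
    have hz1 : ‖z - z₀‖ ≤ T - ρ := by
      have h1 : ‖z - z₀‖ ≤ ‖z - p‖ + ‖p - z₀‖ := norm_sub_le_norm_sub_add_norm_sub z p z₀
      have h2 : ‖z - p‖ ≤ ρ := by rwa [mem_closedBall, dist_eq_norm] at hz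
      have : ‖p - z₀‖ = T - 2*ρ := by rw [hρ]; ring
      linarith
    have hzK : z ∈ closedBall z₀ T := by
      rw [mem_closedBall, dist_eq_norm]; linarith
    have hle := hpmax hzK
    have hle' : u z ≤ u p := hle
    have h3 : ρ * ‖deriv H z‖ ≤ u z := by
      rw [hu]
      have : ρ ≤ T - ‖z - z₀‖ := by linarith
      exact mul_le_mul_of_nonneg_right this (norm_nonneg _)
    rw [hupeq] at hle'
    nlinarith [norm_nonneg (deriv H z)]
  -- Schwarz lemma for deriv H on ball p ρ
  have hschwarz : ∀ z ∈ ball p ρ, dist (deriv H z) (deriv H p) ≤ (4*μ/ρ) * dist z p := by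
    intro z hz
    refine Complex.dist_le_div_mul_dist_of_mapsTo_ball
      (hH'.differentiableOn) ?_ hz
    intro w hw
    have h1 : ‖deriv H w‖ ≤ 2*μ := hder_bound w (ball_subset_closedBall hw)
    have : dist (deriv H w) (deriv H p) ≤ 3*μ := by
      rw [dist_eq_norm]
      calc ‖deriv H w - deriv H p‖ ≤ ‖deriv H w‖ + ‖deriv H p‖ := norm_sub_le _ _
        _ ≤ 2*μ + μ := by rw [← hμ]; linarith
        _ = 3*μ := by ring
    rw [mem_closedBall]
    linarith
  set r : ℝ := ρ / 8 with hr
  have hr0 : 0 < r := by positivity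
  -- mean value estimate
  have hmv : ∀ z ∈ closedBall p r, ‖H z - H p - deriv H p * (z - p)‖ ≤ μ/2 * ‖z - p‖ := by
    intro z hz
    have hconv : Convex ℝ (closedBall p r) := convex_closedBall p r
    have hG : ∀ w ∈ closedBall p r,
        HasDerivWithinAt (fun z => H z - deriv H p * z) (deriv H w - deriv H p) (closedBall p r) w := by
      intro w hw
      have hlin : HasDerivAt (fun z : ℂ => deriv H p * z) (deriv H p) w := by
        simpa using (hasDerivAt_id w).const_mul (deriv H p)
      exact ((hH w).hasDerivAt.sub hlin).hasDerivWithinAt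
    have hbound : ∀ w ∈ closedBall p r, ‖deriv H w - deriv H p‖ ≤ μ/2 := by
      intro w hw
      have hwball : w ∈ ball p ρ := by
        rw [mem_closedBall] at hw
        rw [mem_ball]
        calc dist w p ≤ r := hw
          _ < ρ := by rw [hr]; linarith
      have := hschwarz w hwball
      rw [dist_eq_norm] at this
      calc ‖deriv H w - deriv H p‖ ≤ (4*μ/ρ) * dist w p := this
        _ ≤ (4*μ/ρ) * r := by
            apply mul_le_mul_of_nonneg_left _ (by positivity)
            rw [mem_closedBall] at hz
            rw [mem_closedBall] at hw
            exact hw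
        _ = μ/2 := by rw [hr]; field_simp; ring
    have key := hconv.norm_image_sub_le_of_norm_hasDerivWithin_le hG hbound
      (mem_closedBall_self hr0.le) hz
    calc ‖H z - H p - deriv H p * (z - p)‖
        = ‖(H z - deriv H p * z) - (H p - deriv H p * p)‖ := by ring_nf
      _ ≤ μ/2 * ‖z - p‖ := key
  -- lower bound on sphere
  have hsphere : ∀ z ∈ sphere p r, μ*r/2 ≤ ‖H z - H p‖ := by
    intro z hz
    have hz' : z ∈ closedBall p r := sphere_subset_closedBall hz
    have h1 := hmv z hz'
    have hzp : ‖z - p‖ = r := by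
      rw [mem_sphere, dist_eq_norm] at hz
      exact hz
    have h2 : ‖deriv H p * (z - p)‖ = μ * r := by
      rw [norm_mul, hzp, ← hμ]
    have h3 : ‖deriv H p * (z - p)‖ - ‖H z - H p - deriv H p * (z - p)‖ ≤ ‖H z - H p‖ := by
      have := norm_sub_norm_le (H z - H p) (H z - H p - deriv H p * (z - p))
      have he : (H z - H p) - (H z - H p - deriv H p * (z - p)) = deriv H p * (z - p) := by ring
      calc ‖deriv H p * (z - p)‖ - ‖H z - H p - deriv H p * (z - p)‖
          = ‖(H z - H p) - (H z - H p - deriv H p * (z - p))‖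
            - ‖H z - H p - deriv H p * (z - p)‖ := by rw [he]
        _ ≤ ‖H z - H p‖ := by
            have := norm_sub_le (H z - H p) (H z - H p - deriv H p * (z - p))
            have h4 := norm_le_insert' (H z - H p) (H z - H p - deriv H p * (z - p))
            linarith [norm_sub_norm_le ((H z - H p) - (H z - H p - deriv H p * (z - p))) (-(H z - H p - deriv H p * (z - p)))]
    rw [h2] at h3
    have hb : ‖H z - H p - deriv H p * (z - p)‖ ≤ μ/2 * r := by
      calc ‖H z - H p - deriv H p * (z - p)‖ ≤ μ/2 * ‖z - p‖ := h1
        _ = μ/2 * r := by rw [hzp]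
    linarith
  -- apply quantitative open mapping
  have hdc : DiffContOnCl ℂ H (ball p r) := hH.diffContOnCl
  have hfreq : ∃ᶠ z in nhds p, H z ≠ H p := by
    by_contra hcon
    rw [Filter.not_frequently] at hcon
    have heq : H =ᶠ[nhds p] (fun _ => H p) := by
      filter_upwards [hcon] with z hz
      simpa using hz
    have : deriv H p = 0 := by
      rw [Filter.EventuallyEq.deriv_eq heq]
      simp
    rw [hμ, this] at hμ0
    simp at hμ0
  have himg := DiffContOnCl.ball_subset_image_closedBall hdc hr0 hsphere hfreq
  refine ⟨H p, ?_⟩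
  have hRle : R ≤ μ*r/2/2 := by
    have h1 : μ * r / 2 / 2 = u p / 64 := by
      rw [hupeq, hr]; ring
    have h2 : T * δ / 64 = R := by
      rw [hT]; field_simp
    rw [h1]
    rw [← h2]
    linarith
  intro x hx
  have hx' : x ∈ ball (H p) (μ*r/2/2) := by
    rw [mem_ball] at hx ⊢
    linarith
  obtain ⟨y, _, hy⟩ := himg hx'
  exact ⟨y, hy⟩


noncomputable def Xg (n : ℕ) : ℝ := Real.log (Real.sqrt n + Real.sqrt ((n:ℝ) - 1))

lemma Xg_cosh {n : ℕ} (hn : 1 ≤ n) : Real.cosh (Xg n) = Real.sqrt n := by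
  have h1 : (1:ℝ) ≤ (n:ℝ) := by exact_mod_cast hn
  have hs : (1:ℝ) ≤ Real.sqrt n := by
    rw [show (1:ℝ) = Real.sqrt 1 by simp]
    exact Real.sqrt_le_sqrt h1
  have hpos : 0 < Real.sqrt n + Real.sqrt ((n:ℝ) - 1) := by
    have := Real.sqrt_nonneg ((n:ℝ) - 1)
    linarith
  have hexp : Real.exp (Xg n) = Real.sqrt n + Real.sqrt ((n:ℝ) - 1) := Real.exp_log hpos
  have hprod : (Real.sqrt n + Real.sqrt ((n:ℝ)-1)) * (Real.sqrt n - Real.sqrt ((n:ℝ)-1)) = 1 := by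
    have h2 : Real.sqrt n ^ 2 = (n:ℝ) := Real.sq_sqrt (by linarith)
    have h3 : Real.sqrt ((n:ℝ)-1) ^ 2 = (n:ℝ) - 1 := Real.sq_sqrt (by linarith)
    nlinarith
  have hexpneg : Real.exp (-(Xg n)) = Real.sqrt n - Real.sqrt ((n:ℝ)-1) := by
    rw [Real.exp_neg, hexp]
    rw [inv_eq_iff_eq_inv, eq_comm, inv_eq_iff_eq_inv]
    field_simp
    linarith [hprod]
  rw [Real.cosh_eq, hexp, hexpneg]
  ring

lemma Xg_gap {n : ℕ} (hn : 1 ≤ n) : Xg (n+1) ≤ Xg n + Real.log (1 + Real.sqrt 2) := by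
  have h1 : (1:ℝ) ≤ (n:ℝ) := by exact_mod_cast hn
  have hposn : 0 < Real.sqrt n + Real.sqrt ((n:ℝ) - 1) := by
    have hs : (1:ℝ) ≤ Real.sqrt n := by
      rw [show (1:ℝ) = Real.sqrt 1 by simp]; exact Real.sqrt_le_sqrt h1
    linarith [Real.sqrt_nonneg ((n:ℝ)-1)]
  have h2pos : (0:ℝ) < 1 + Real.sqrt 2 := by positivity
  rw [Xg, Xg, ← Real.log_mul (by positivity) (by positivity)]
  apply Real.log_le_log (by positivity)
  have hcast : ((n+1:ℕ):ℝ) = (n:ℝ)+1 := by push_cast; ring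
  rw [hcast]
  have key : Real.sqrt ((n:ℝ)+1) ≤ Real.sqrt 2 * Real.sqrt n := by
    rw [← Real.sqrt_mul (by norm_num)]
    apply Real.sqrt_le_sqrt
    linarith
  have h5 : ((n:ℝ)+1) - 1 = (n:ℝ) := by ring
  rw [h5]
  have h6 : (0:ℝ) ≤ Real.sqrt ((n:ℝ)-1) := Real.sqrt_nonneg _
  have h7 : (0:ℝ) ≤ Real.sqrt n := Real.sqrt_nonneg _
  nlinarith [Real.sqrt_nonneg (2:ℝ)]

-- choose n near any x ≥ 0
lemma Xg_near {x : ℝ} (hx : 0 ≤ x) :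
    ∃ n : ℕ, 1 ≤ n ∧ |Xg n - x| ≤ Real.log (1 + Real.sqrt 2) := by
  have hL0 : 0 ≤ Real.log (1 + Real.sqrt 2) := by
    apply Real.log_nonneg
    linarith [Real.sqrt_nonneg (2:ℝ)]
  have hex : ∃ j : ℕ, x ≤ Xg (j+1) := by
    obtain ⟨N, hN⟩ := exists_nat_ge ((Real.exp x)^2)
    refine ⟨N, ?_⟩
    have h1 : Real.exp x ≤ Real.sqrt (N+1) := by
      rw [show ((N:ℝ)+1) = ((N+1:ℕ):ℝ) by push_cast; ring] at *
      apply Real.le_sqrt' (Real.exp_pos x) |>.mpr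
      push_cast
      nlinarith [Real.exp_pos x]
    have h2 : Real.sqrt ((N+1:ℕ):ℝ) ≤ Real.exp (Xg (N+1)) := by
      have hpos : 0 < Real.sqrt ((N+1:ℕ):ℝ) + Real.sqrt (((N+1:ℕ):ℝ) - 1) := by
        have : (1:ℝ) ≤ Real.sqrt ((N+1:ℕ):ℝ) := by
          rw [show (1:ℝ) = Real.sqrt 1 by simp]
          apply Real.sqrt_le_sqrt; push_cast; linarith
        linarith [Real.sqrt_nonneg (((N+1:ℕ):ℝ) - 1)]
      rw [Xg, Real.exp_log hpos]
      linarith [Real.sqrt_nonneg (((N+1:ℕ):ℝ) - 1)]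
    have := Real.exp_le_exp.mp (by
      calc Real.exp x ≤ Real.sqrt ((N+1:ℕ):ℝ) := by
            rw [show ((N+1:ℕ):ℝ) = (N:ℝ)+1 by push_cast; ring]
            exact h1
        _ ≤ Real.exp (Xg (N+1)) := h2)
    exact this
  classical
  set j₀ := Nat.find hex with hj₀
  have hfind := Nat.find_spec hex
  rcases Nat.eq_zero_or_pos j₀ with h0 | hpos
  · refine ⟨1, le_refl 1, ?_⟩
    have hX1 : Xg 1 = 0 := by
      rw [Xg]
      norm_num
    rw [← hj₀, h0] at hfind
    rw [hX1] at hfind ⊢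
    rw [_root_.abs_of_nonpos (by linarith)]
    linarith
  · refine ⟨j₀ + 1, by omega, ?_⟩
    have hnot : ¬ x ≤ Xg ((j₀ - 1) + 1) := Nat.find_min hex (by omega)
    have hlt : Xg j₀ < x := by
      push_neg at hnot
      rwa [Nat.sub_add_cancel hpos] at hnot
    have hgap := Xg_gap (n := j₀) hpos
    rw [← hj₀] at hfind
    rw [_root_.abs_of_nonneg (by linarith [hfind])]
    linarith


lemma cosh_sq_grid (s : ℝ) (n : ℕ) (hc : Real.cosh s ^ 2 = (n:ℝ)) (k : ℤ) :
    ∃ m : ℤ, Complex.cosh ((s:ℂ) + ((k * (Real.pi/2) : ℝ):ℂ) * I) ^ 2 = (m:ℂ) := by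
  set t : ℝ := k * (Real.pi/2) with ht
  have hcosh : Complex.cosh ((s:ℂ) + (t:ℂ) * I)
      = (Real.cosh s : ℂ) * (Real.cos t : ℂ) + (Real.sinh s : ℂ) * ((Real.sin t : ℂ) * I) := by
    rw [Complex.cosh_add, Complex.cosh_mul_I, Complex.sinh_mul_I]
    rw [← Complex.ofReal_cosh, ← Complex.ofReal_sinh, ← Complex.ofReal_cos, ← Complex.ofReal_sin]
  have horto : Real.sin t * Real.cos t = 0 := by
    have h2t : 2 * t = k * Real.pi := by rw [ht]; ring
    have := Real.sin_int_mul_pi k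
    have h3 : Real.sin (2*t) = 0 := by rw [h2t]; exact_mod_cast this
    rw [Real.sin_two_mul] at h3
    linarith
  have hI : (I:ℂ)^2 = -1 := Complex.I_sq
  have horto' : (Real.sin t : ℂ) * (Real.cos t : ℂ) = 0 := by
    rw [← Complex.ofReal_mul]
    rw [show Real.sin t * Real.cos t = 0 from horto]
    simp
  have hsq : Complex.cosh ((s:ℂ) + (t:ℂ) * I) ^ 2
      = (Real.cosh s:ℂ)^2 * (Real.cos t:ℂ)^2 - (Real.sinh s:ℂ)^2 * (Real.sin t:ℂ)^2 := by
    rw [hcosh]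
    linear_combination (2*(Real.cosh s:ℂ)*(Real.sinh s:ℂ)*I) * horto'
      + ((Real.sinh s:ℂ)^2*(Real.sin t:ℂ)^2) * hI
  have hpyth := Real.sin_sq_add_cos_sq t
  have hsinh : Real.sinh s ^ 2 = (n:ℝ) - 1 := by
    have := Real.cosh_sq_sub_sinh_sq s
    nlinarith
  rcases mul_eq_zero.mp horto with hsin | hcos
  · refine ⟨(n:ℤ), ?_⟩
    rw [hsq]
    have hcos2 : Real.cos t ^ 2 = 1 := by nlinarith
    rw [hsin]
    have hcc : ((Real.cos t:ℂ))^2 = 1 := by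
      rw [← Complex.ofReal_pow, hcos2]; simp
    have hhc : ((Real.cosh s:ℂ))^2 = (n:ℂ) := by
      rw [← Complex.ofReal_pow, hc]; simp
    rw [hcc, hhc]
    push_cast
    ring
  · refine ⟨1 - (n:ℤ), ?_⟩
    rw [hsq]
    have hsin2 : Real.sin t ^ 2 = 1 := by nlinarith
    rw [hcos]
    have hss : ((Real.sin t:ℂ))^2 = 1 := by
      rw [← Complex.ofReal_pow, hsin2]; simp
    have hsh : ((Real.sinh s:ℂ))^2 = (n:ℂ) - 1 := by
      rw [← Complex.ofReal_pow, hsinh]; push_cast; ring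
    rw [hss, hsh]
    push_cast
    ring

lemma grid_near (w : ℂ) : ∃ γ : ℂ, (∃ m : ℤ, Complex.cosh γ ^ 2 = (m:ℂ)) ∧ dist γ w < 2 := by
  classical
  set L : ℝ := Real.log (1 + Real.sqrt 2) with hL
  have hL1 : L < 1.2 := by
    rw [hL, Real.log_lt_iff_lt_exp (by positivity)]
    have h2 : Real.sqrt 2 < 1.5 := by
      rw [show (1.5:ℝ) = Real.sqrt (1.5^2) by rw [Real.sqrt_sq]; norm_num]
      apply Real.sqrt_lt_sqrt (by norm_num)
      norm_num
    have he : (2.7182818283:ℝ) < Real.exp 1 := Real.exp_one_gt_d9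
    have : Real.exp 1.2 ≥ 1 + 1.2 := by
      have := Real.add_one_le_exp (1.2:ℝ)
      linarith
    nlinarith [Real.exp_pos (1:ℝ), Real.exp_pos (0.2:ℝ),
      Real.add_one_le_exp (0.2:ℝ), Real.exp_add 1 0.2]
  set k : ℤ := round (w.im / (Real.pi/2)) with hk
  set t : ℝ := k * (Real.pi/2) with htdef
  have hpi : (0:ℝ) < Real.pi/2 := by positivity
  have htim : |t - w.im| ≤ Real.pi/4 := by
    have h1 : |w.im / (Real.pi/2) - k| ≤ 1/2 := abs_sub_round (w.im / (Real.pi/2))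
    have h2 : t - w.im = -((w.im / (Real.pi/2) - k) * (Real.pi/2)) := by
      field_simp [htdef]
      ring
    rw [h2, abs_neg, abs_mul, abs_of_pos hpi]
    calc |w.im / (Real.pi/2) - ↑k| * (Real.pi/2) ≤ (1/2) * (Real.pi/2) :=
          mul_le_mul_of_nonneg_right h1 hpi.le
      _ = Real.pi/4 := by ring
  obtain ⟨n, hn1, hnear⟩ := Xg_near (abs_nonneg w.re)
  set s : ℝ := if 0 ≤ w.re then Xg n else -(Xg n) with hs
  have hsre : |s - w.re| ≤ L := by
    rcases le_or_gt 0 w.re with hre | hre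
    · rw [hs, if_pos hre]
      rwa [_root_.abs_of_nonneg hre] at hnear
    · rw [hs, if_neg (not_le.mpr hre)]
      rw [_root_.abs_of_neg hre] at hnear
      have : -(Xg n) - w.re = -(Xg n - -w.re) := by ring
      rw [this, abs_neg]
      exact hnear
  have hcoshs : Real.cosh s ^ 2 = (n:ℝ) := by
    have h1 : Real.cosh s = Real.cosh (Xg n) := by
      rcases le_or_gt 0 w.re with hre | hre
      · rw [hs, if_pos hre]
      · rw [hs, if_neg (not_le.mpr hre), Real.cosh_neg]
    rw [h1, Xg_cosh hn1, Real.sq_sqrt (by positivity)]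
  refine ⟨(s:ℂ) + ((k * (Real.pi/2) : ℝ):ℂ) * I, cosh_sq_grid s n hcoshs k, ?_⟩
  have hre : ((s:ℂ) + ((k * (Real.pi/2) : ℝ):ℂ) * I - w).re = s - w.re := by simp
  have him : ((s:ℂ) + ((k * (Real.pi/2) : ℝ):ℂ) * I - w).im = t - w.im := by
    simp [htdef]
  rw [Complex.dist_eq]
  calc ‖(s:ℂ) + ((k * (Real.pi/2) : ℝ):ℂ) * I - w‖
      ≤ |((s:ℂ) + ((k * (Real.pi/2) : ℝ):ℂ) * I - w).re|
        + |((s:ℂ) + ((k * (Real.pi/2) : ℝ):ℂ) * I - w).im| := Complex.norm_le_abs_re_add_abs_im _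
    _ ≤ L + Real.pi/4 := by
        rw [hre, him]
        exact add_le_add hsre htim
    _ < 2 := by
        have hpi4 : Real.pi < 3.15 := Real.pi_lt_d2
        linarith





theorem picard01 {f : ℂ → ℂ} (hf : Differentiable ℂ f) (h0 : ∀ z, f z ≠ 0)
    (h1 : ∀ z, f z ≠ 1) : ∀ z w : ℂ, f z = f w := by
  obtain ⟨G, hGd, hGe⟩ := entire_log hf h0
  set g : ℂ → ℂ := fun z => G z / (2 * Real.pi * I) with hg
  have hgd : Differentiable ℂ g := hGd.div_const _
  have hgZ : ∀ z : ℂ, ∀ m : ℤ, g z ≠ (m : ℂ) := by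
    intro z m hzm
    have hpi : (2 * (Real.pi:ℂ) * I) ≠ 0 := by
      simp [Real.pi_ne_zero, Complex.I_ne_zero, Complex.ofReal_ne_zero]
    have hGz : G z = (m:ℂ) * (2 * Real.pi * I) := by
      rw [hg] at hzm
      field_simp at hzm
      linear_combination hzm
    have : f z = 1 := by
      rw [← hGe z, hGz]
      exact_mod_cast Complex.exp_int_mul_two_pi_mul_I m
    exact h1 z this
  have hg0 : ∀ z, g z ≠ 0 := fun z => by
    have := hgZ z 0; simpa using this
  have hg1 : ∀ z, g z - 1 ≠ 0 := fun z => by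
    have := hgZ z 1
    intro hcon
    apply this
    have : g z = 1 := by linear_combination hcon
    simpa using this
  obtain ⟨Lg, hLgd, hLge⟩ := entire_log hgd hg0
  obtain ⟨L1, hL1d, hL1e⟩ := entire_log (hgd.sub_const 1) hg1
  set q : ℂ → ℂ := fun z => Complex.exp (Lg z / 2) - Complex.exp (L1 z / 2) with hq
  have hqd : Differentiable ℂ q := ((hLgd.div_const 2).cexp).sub ((hL1d.div_const 2).cexp)
  have hsq : ∀ z, Complex.exp (Lg z / 2) ^ 2 = g z := by
    intro z
    rw [← Complex.exp_nat_mul]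
    have : (2:ℂ) * (Lg z / 2) = Lg z := by ring
    rw [show ((2:ℕ):ℂ) * (Lg z / 2) = Lg z by push_cast; ring]
    exact hLge z
  have hsq1 : ∀ z, Complex.exp (L1 z / 2) ^ 2 = g z - 1 := by
    intro z
    rw [← Complex.exp_nat_mul]
    rw [show ((2:ℕ):ℂ) * (L1 z / 2) = L1 z by push_cast; ring]
    exact hL1e z
  have hqnz : ∀ z, q z ≠ 0 := by
    intro z hcon
    rw [hq] at hcon
    have heqe : Complex.exp (Lg z / 2) = Complex.exp (L1 z / 2) := by
      linear_combination hcon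
    have h3 : g z = g z - 1 := by
      have h4 := congrArg (fun x => x^2) heqe
      rw [hsq z, hsq1 z] at h4
      exact h4
    exact one_ne_zero (by linear_combination h3)
  obtain ⟨H, hHd, hHe⟩ := entire_log hqd hqnz
  have hinv : ∀ z, Complex.exp (-(H z)) = Complex.exp (Lg z / 2) + Complex.exp (L1 z / 2) := by
    intro z
    have hmul : q z * (Complex.exp (Lg z / 2) + Complex.exp (L1 z / 2)) = 1 := by
      rw [hq]
      linear_combination hsq z - hsq1 z
    rw [Complex.exp_neg, hHe z]
    exact inv_eq_of_mul_eq_one_right hmul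
  have hcosh : ∀ z, Complex.cosh (H z) ^ 2 = g z := by
    intro z
    rw [Complex.cosh, hHe z, hinv z]
    have h1 : (Complex.exp (Lg z / 2) - Complex.exp (L1 z / 2)
        + (Complex.exp (Lg z / 2) + Complex.exp (L1 z / 2))) / 2 = Complex.exp (Lg z / 2) := by
      ring
    rw [hq, h1]
    exact hsq z
  -- H must have identically zero derivative
  have hder : ∀ z, deriv H z = 0 := by
    intro z₀
    by_contra hd0
    obtain ⟨w, hw⟩ := bloch hHd hd0 (R := 2) (by norm_num)
    obtain ⟨γ, ⟨m, hm⟩, hdist⟩ := grid_near w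
    have hγ : γ ∈ ball w 2 := mem_ball.mpr hdist
    obtain ⟨z, hz⟩ := hw hγ
    apply hgZ z m
    rw [← hcosh z, hz, hm]
  have hHconst : ∀ z w : ℂ, H z = H w := fun z w =>
    is_const_of_deriv_eq_zero hHd hder z w
  intro z w
  rw [← hGe z, ← hGe w]
  have hgzw : g z = g w := by rw [← hcosh z, ← hcosh w, hHconst z w]
  have hGzw : G z = G w := by
    have hpi : (2 * (Real.pi:ℂ) * I) ≠ 0 := by
      simp [Real.pi_ne_zero, Complex.I_ne_zero, Complex.ofReal_ne_zero]
    have hz' : G z = g z * (2 * Real.pi * I) := by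
      rw [hg]
      field_simp
    have hw' : G w = g w * (2 * Real.pi * I) := by
      rw [hg]
      field_simp
    rw [hz', hw', hgzw]
  rw [hGzw]

theorem picard_forces_B_zero (h : ℂ → ℂ) (hh : Differentiable ℂ h)
    (hnc : ¬ ∃ w : ℂ, ∀ z : ℂ, h z = w) (hnz : ∀ z : ℂ, h z ≠ 0)
    (c A B : ℂ) (hA : A ≠ 0) (heq : ∀ z : ℂ, h (z + c) = A * h z + B) :
    B = 0 := by
  by_contra hB
  set f : ℂ → ℂ := fun z => (-A/B) * h z with hfdef
  have hco : (-A/B) ≠ 0 := div_ne_zero (neg_ne_zero.mpr hA) hB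
  have hfd : Differentiable ℂ f := hh.const_mul _
  have h0 : ∀ z, f z ≠ 0 := fun z => mul_ne_zero hco (hnz z)
  have h1 : ∀ z, f z ≠ 1 := by
    intro z hcon
    apply hnz (z + c)
    rw [heq z]
    have hhz : A * h z = -B := by
      have : (-A/B) * h z = 1 := hcon
      field_simp at this
      linear_combination -this
    rw [hhz]
    ring
  have hconst := picard01 hfd h0 h1
  apply hnc
  refine ⟨h 0, fun z => ?_⟩
  have := hconst z 0
  simp only [hfdef] at this
  exact mul_left_cancel₀ hco this
end

section
/- Let P be a polynomial over ℂ and let c ∈ ℂ, c ≠ 0. If exp(P(z + c)) = exp(P(z)) for all z ∈ ℂ, then P has degree at most 1; moreover, writing P(z) = αz + β, one has exp(αc) = 1. -/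
open Polynomial

theorem exp_poly_periodic (P : Polynomial ℂ) (c : ℂ) (hc : c ≠ 0)
    (heq : ∀ z : ℂ, Complex.exp (P.eval (z + c)) = Complex.exp (P.eval z)) :
    P.natDegree ≤ 1 ∧ Complex.exp (P.coeff 1 * c) = 1 := by
  have hQ1 : ∀ z : ℂ, Complex.exp (P.eval (z + c) - P.eval z) = 1 := by
    intro z
    rw [Complex.exp_sub, heq z, div_self (Complex.exp_ne_zero _)]
  set Q : Polynomial ℂ := P.comp (X + C c) - P with hQdef
  have hQev : ∀ z : ℂ, Q.eval z = P.eval (z + c) - P.eval z := by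
    intro z; simp [hQdef, eval_comp]
  -- Q has degree ≤ 0
  have hQdeg : Q.degree ≤ 0 := by
    by_contra h
    push_neg at h
    have hpos : 0 < (Q - C (Real.pi * Complex.I)).degree := by
      rwa [sub_eq_add_neg, ← map_neg, degree_add_C h]
    obtain ⟨z, hz⟩ := Complex.exists_root hpos
    have hzval : Q.eval z = Real.pi * Complex.I := by
      have := hz
      simp only [IsRoot, eval_sub, eval_C, sub_eq_zero] at this
      exact this
    have : Complex.exp (Real.pi * Complex.I) = 1 := by
      rw [← hzval, hQev z]; exact hQ1 z
    rw [Complex.exp_pi_mul_I] at this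
    norm_num at this
  have hQC : Q = C (Q.coeff 0) := eq_C_of_degree_le_zero hQdeg
  -- derivative is periodic
  have hcomp : P.comp (X + C c) = P + C (Q.coeff 0) := by
    have : Q = C (Q.coeff 0) := hQC
    rw [hQdef] at this
    linear_combination (norm := ring_nf) this
    rw [← hQdef, sub_self]
  have hder : (derivative P).comp (X + C c) = derivative P := by
    have h1 := congrArg derivative hcomp
    rw [derivative_comp] at h1
    simpa using h1
  have hderev : ∀ z : ℂ, (derivative P).eval (z + c) = (derivative P).eval z := by
    intro z
    have := congrArg (eval z) hder
    simpa [eval_comp] using this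
  -- derivative P - C (value at 0) has infinitely many roots
  have hdernat : ∀ n : ℕ, (derivative P).eval ((n : ℂ) * c) = (derivative P).eval 0 := by
    intro n
    induction n with
    | zero => simp
    | succ k ih =>
      have : ((k : ℂ) + 1) * c = (k : ℂ) * c + c := by ring
      rw [Nat.cast_succ, this, hderev, ih]
  have hR0 : derivative P - C ((derivative P).eval 0) = 0 := by
    apply eq_zero_of_infinite_isRoot
    apply Set.Infinite.mono (s := (fun n : ℕ => (n : ℂ) * c) '' Set.univ)
    · rintro x ⟨n, -, rfl⟩
      simp [IsRoot, hdernat n]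
    · apply Set.Infinite.image
      · intro a _ b _ hab
        simp only at hab
        have := mul_right_cancel₀ hc hab
        exact_mod_cast this
      · exact Set.infinite_univ
  have hderC : derivative P = C ((derivative P).eval 0) := by
    linear_combination (norm := ring_nf) hR0
  -- degree bound
  have hnd : P.natDegree ≤ 1 := by
    rw [natDegree_le_iff_coeff_eq_zero]
    intro m hm
    obtain ⟨k, rfl⟩ : ∃ k, m = k + 2 := ⟨m - 2, by omega⟩
    have h1 : (derivative P).coeff (k + 1) = P.coeff (k + 2) * (k + 2) := by
      have := coeff_derivative P (k + 1)
      push_cast at this ⊢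
      convert this using 2 <;> ring
    rw [hderC, coeff_C, if_neg (by omega)] at h1
    have h2 : ((k : ℂ) + 2) ≠ 0 := by
      have h3 : ((k + 2 : ℕ) : ℂ) ≠ 0 := Nat.cast_ne_zero.mpr (by omega)
      push_cast at h3
      exact h3
    exact (mul_eq_zero.mp h1.symm).resolve_right h2
  refine ⟨hnd, ?_⟩
  -- compute P.eval c - P.eval 0 = coeff 1 * c
  have hrep := eq_X_add_C_of_natDegree_le_one hnd
  have hkey : P.eval (0 + c) - P.eval 0 = P.coeff 1 * c := by
    conv_lhs => rw [hrep]
    simp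
  rw [← hkey]
  exact hQ1 0
end

section
/- Let n, m be positive integers with n ≠ m, let α, β, c, a, A, B ∈ ℂ with A ≠ 0, B ≠ 0, Aⁿ + Bᵐ = 1, e^{αc} = n/m, and e^{((m−n)/n)·a} = (B/A)ᵐ (a choice of a exists since (1 − n/m)a = n·Log(B/A) can be solved). Define g(z) = e^{αz + β} + a and f(z) = A·e^{g(z)/n}. Then f(z)ⁿ + f(z + c)ᵐ = e^{g(z)} for all z ∈ ℂ. -/
theorem example_three (n m : ℕ) (hn : 0 < n) (hm : 0 < m) (hnm : n ≠ m)
    (α β c a A B : ℂ) (hA : A ≠ 0) (hB : B ≠ 0) (hAB : A ^ n + B ^ m = 1)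
    (hαc : Complex.exp (α * c) = (n : ℂ) / (m : ℂ))
    (ha : Complex.exp (((m : ℂ) - (n : ℂ)) / (n : ℂ) * a) = (B / A) ^ m) :
    ∀ z : ℂ,
      (A * Complex.exp ((Complex.exp (α * z + β) + a) / n)) ^ n
        + (A * Complex.exp ((Complex.exp (α * (z + c) + β) + a) / n)) ^ m
      = Complex.exp (Complex.exp (α * z + β) + a) := by
  intro z
  have hn' : (n : ℂ) ≠ 0 := Nat.cast_ne_zero.mpr hn.ne'
  have hm' : (m : ℂ) ≠ 0 := Nat.cast_ne_zero.mpr hm.ne'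
  have hw : Complex.exp (α * (z + c) + β) = Complex.exp (α * z + β) * ((n : ℂ) / m) := by
    rw [← hαc, ← Complex.exp_add]; ring_nf
  set w := Complex.exp (α * z + β) with hwdef
  rw [hw, mul_pow, mul_pow, ← Complex.exp_nat_mul, ← Complex.exp_nat_mul]
  have h1 : (n : ℂ) * ((w + a) / n) = w + a := by field_simp
  have h2 : (m : ℂ) * ((w * ((n : ℂ) / m) + a) / n)
      = w + (((m : ℂ) - n) / n * a + a) := by field_simp; ring
  rw [h1, h2, Complex.exp_add w, Complex.exp_add w, Complex.exp_add (((m : ℂ) - n) / n * a), ha]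
  have key : A ^ m * (B / A) ^ m = B ^ m := by
    rw [div_pow]; field_simp
  linear_combination Complex.exp w * Complex.exp a * hAB
    + Complex.exp w * Complex.exp a * key
end

section
/- Let n be a positive integer, c ∈ ℂ, and let h : ℂ → ℂ be entire with h(z + c) = h(z) for all z. Let A, B, aₒ ∈ ℂ with A ≠ 0, B ≠ 0, Aⁿ + Bⁿ = 1, and e^{aₒ·c} = (B/A)ⁿ. Define g(z) = h(z) + aₒ·z and f(z) = A·e^{g(z)/n}. Then f(z)ⁿ + f(z + c)ⁿ = e^{g(z)} for all z ∈ ℂ. -/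
theorem example_four (n : ℕ) (hn : 0 < n) (c : ℂ) (h : ℂ → ℂ)
    (hh : Differentiable ℂ h) (hper : ∀ z : ℂ, h (z + c) = h z)
    (A B a₀ : ℂ) (hA : A ≠ 0) (hB : B ≠ 0) (hAB : A ^ n + B ^ n = 1)
    (ha : Complex.exp (a₀ * c) = (B / A) ^ n) :
    ∀ z : ℂ,
      (A * Complex.exp ((h z + a₀ * z) / n)) ^ n
        + (A * Complex.exp ((h (z + c) + a₀ * (z + c)) / n)) ^ n
      = Complex.exp (h z + a₀ * z) := by
  intro z
  have hn' : (n : ℂ) ≠ 0 := Nat.cast_ne_zero.mpr hn.ne'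
  have key : ∀ w : ℂ, (Complex.exp (w / n)) ^ n = Complex.exp w := by
    intro w
    rw [← Complex.exp_nat_mul, mul_div_cancel₀ _ hn']
  rw [hper, mul_pow, mul_pow, key, key]
  have : h z + a₀ * (z + c) = (h z + a₀ * z) + a₀ * c := by ring
  rw [this, show Complex.exp (h z + a₀ * z + a₀ * c) = Complex.exp (h z + a₀ * z) * Complex.exp (a₀ * c) from Complex.exp_add _ _, ha, div_pow]
  field_simp
  linear_combination hAB
end
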